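/- For a set S of pointed matrices (S ⊆ matr_*), the following are equivalent: (i) every finitely complete pointed category has S-closed relations; (ii) the category of pointed sets has S-closed relations; (iii) for every matrix M ∈ S, either all entries of the right column of M equal ∗, or the right column of M equals one of its left columns. -/

import Mathlib

open CategoryTheory CategoryTheory.Limits

universe w v u

/-- A pointed extended matrix `M ∈ matr_*(n,m,k)`: `n > 0` rows, `m` left
columns and one right column, with entries in `{∗, x₁, …, x_k}` (modelled as
`Option (Fin k)`, where `none` is `∗`). `matr_*` is the union over all
`n,m,k`, i.e. the type `MatrStar`. -/
structure MatrStar where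
  n : ℕ
  m : ℕ
  k : ℕ
  npos : 0 < n
  left : Fin n → Fin m → Option (Fin k)
  right : Fin n → Option (Fin k)

namespace MatrStar

variable {C : Type u} [Category.{v} C] [HasZeroMorphisms C]

/-- A relation `r : R ⟶ P` in a pointed category, where `pr` exhibits `P` as
the `n`-fold product `Xⁿ`, is `M`-closed: for every object `Z` and every
interpretation `f : {∗,x₁,…,x_k} → C(Z,X)` with `f ∗ = 0`, if for every left
column `j` the induced morphism `Z ⟶ Xⁿ` factors through `r`, then so does
the morphism induced by the right column. -/
def IsClosed (M : MatrStar) {X P R : C} (pr : Fin M.n → (P ⟶ X))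
    (hP : IsLimit (Fan.mk P pr)) (r : R ⟶ P) : Prop :=
  ∀ (Z : C) (f : Option (Fin M.k) → (Z ⟶ X)), f none = 0 →
    ((∀ j : Fin M.m, ∃ g : Z ⟶ R,
        g ≫ r = hP.lift (Fan.mk Z (fun i => f (M.left i j)))) →
    ∃ g : Z ⟶ R, g ≫ r = hP.lift (Fan.mk Z (fun i => f (M.right i))))

/-- A relation `r : R ⟶ P`, where `pr` exhibits `P` as the product
`X₁ × ⋯ × X_n` of a family `X : Fin n → C`, is strictly `M`-closed: for every
object `Z` and every row-wise interpretation `fᵢ : {∗,x₁,…,x_k} → C(Z,Xᵢ)`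
with `fᵢ ∗ = 0`, if every left column's induced morphism factors through `r`,
then so does the right column's induced morphism. -/
def IsStrictClosed (M : MatrStar) {X : Fin M.n → C} {P R : C}
    (pr : ∀ i, P ⟶ X i) (hP : IsLimit (Fan.mk P pr)) (r : R ⟶ P) : Prop :=
  ∀ (Z : C) (f : ∀ i, Option (Fin M.k) → (Z ⟶ X i)), (∀ i, f i none = 0) →
    ((∀ j : Fin M.m, ∃ g : Z ⟶ R,
        g ≫ r = hP.lift (Fan.mk Z (fun i => f i (M.left i j)))) →
    ∃ g : Z ⟶ R, g ≫ r = hP.lift (Fan.mk Z (fun i => f i (M.right i))))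

/-- `C` has `M`-closed `W`-relations: every `n`-ary relation `r : R ⟶ Xⁿ`
belonging to the class of monomorphisms `W` is `M`-closed. -/
def HasClosedRels (M : MatrStar) (C : Type u) [Category.{v} C]
    [HasZeroMorphisms C] (W : MorphismProperty C) : Prop :=
  ∀ (X P R : C) (pr : Fin M.n → (P ⟶ X)) (hP : IsLimit (Fan.mk P pr))
    (r : R ⟶ P), W r → M.IsClosed pr hP r

/-- `C` has `S`-closed `W`-relations. -/
def HasSClosedRels (S : Set MatrStar) (C : Type u) [Category.{v} C]
    [HasZeroMorphisms C] (W : MorphismProperty C) : Prop :=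
  ∀ M ∈ S, HasClosedRels M C W

end MatrStar

/-- The class of strong monomorphisms of `C`, as a `MorphismProperty`. -/
def strongMonos (C : Type u) [Category.{v} C] : MorphismProperty C :=
  fun _ _ f => StrongMono f

/-- The canonical zero-morphism structure on the category `Pointed` of
pointed sets: the zero morphism is the constant map at the base point. -/
instance : HasZeroMorphisms Pointed.{w} where
  zero X Y := ⟨⟨fun _ => Y.point, rfl⟩⟩
  comp_zero _ _ := Pointed.Hom.ext rfl
  zero_comp _ {_ _} f := Pointed.Hom.ext (funext fun _ => f.map_point)

universe v' u'

theorem triv_closed {C : Type u'} [Category.{v'} C] [HasZeroMorphisms C]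
    (M : MatrStar)
    (hM : (∀ i, M.right i = none) ∨ ∃ j : Fin M.m, ∀ i, M.right i = M.left i j) :
    ∀ (X P R : C) (pr : Fin M.n → (P ⟶ X)) (hP : IsLimit (Fan.mk P pr))
      (r : R ⟶ P), M.IsClosed pr hP r := by
  intro X P R pr hP r Z f hf hleft
  rcases hM with h | ⟨j, h⟩
  · refine ⟨0, ?_⟩
    have e : (fun i => f (M.right i)) = fun _ => (0 : Z ⟶ X) := by
      funext i; rw [h i, hf]
    rw [e, zero_comp]
    refine (hP.hom_ext fun ⟨i⟩ => ?_).symm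
    have h2 := hP.fac (Fan.mk Z fun _ => (0 : Z ⟶ X)) ⟨i⟩
    simp only [Fan.mk_pt] at h2 ⊢
    rw [h2]
    simp
  · obtain ⟨g, hg⟩ := hleft j
    refine ⟨g, ?_⟩
    have e : (fun i => f (M.right i)) = fun i => f (M.left i j) := by
      funext i; rw [h i]
    rw [e]; exact hg

namespace CEx

/-- Small category of pointed subsets of `ℕ` (basepoint `0`). -/
def Obj : Type := {s : Set ℕ // 0 ∈ s}

instance : Category.{0} Obj where
  Hom s t := {f : s.1 → t.1 // f ⟨0, s.2⟩ = ⟨0, t.2⟩}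
  id s := ⟨fun x => x, rfl⟩
  comp f g := ⟨fun x => g.1 (f.1 x), by show g.1 (f.1 _) = _; rw [f.2, g.2]⟩

theorem hext {s t : Obj} {f g : s ⟶ t} (h : ∀ x, f.1 x = g.1 x) : f = g :=
  Subtype.ext (funext h)

@[simp] theorem comp_val {s t u : Obj} (f : s ⟶ t) (g : t ⟶ u) (x : s.1) :
    (f ≫ g).1 x = g.1 (f.1 x) := rfl

@[simp] theorem id_val {s : Obj} (x : s.1) : (𝟙 s : s ⟶ s).1 x = x := rfl

instance : HasZeroMorphisms Obj where
  zero s t := ⟨⟨fun _ => ⟨0, t.2⟩, rfl⟩⟩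
  comp_zero f t := rfl
  zero_comp s {_ _} f := hext fun _ => f.2

@[simp] theorem zero_val {s t : Obj} (x : s.1) : (0 : s ⟶ t).1 x = ⟨0, t.2⟩ := rfl

/-- The zero object `{0}`. -/
def zObj : Obj := ⟨{x | x = 0}, rfl⟩

instance (Y : Obj) : Subsingleton (Y ⟶ zObj) :=
  ⟨fun f g => hext fun x => Subtype.ext ((f.1 x).2.trans (g.1 x).2.symm)⟩

instance (Y : Obj) : Nonempty (Y ⟶ zObj) := ⟨0⟩

theorem zObj_eq (x : zObj.1) : x = ⟨0, rfl⟩ := Subtype.ext x.2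

instance : HasZeroObject Obj := by
  refine ⟨⟨zObj, ⟨fun Y => ⟨⟨⟨0⟩, fun f => hext fun x => ?_⟩⟩,
    fun Y => ⟨⟨⟨0⟩, fun f => Subsingleton.elim _ _⟩⟩⟩⟩⟩
  rw [zObj_eq x, f.2]; rfl

instance : HasTerminal Obj := hasTerminal_of_unique zObj


section Prod

variable (s t : Obj)

/-- Binary product object via `Nat.pair`. -/
def pObj : Obj :=
  ⟨{n | ∃ a ∈ s.1, ∃ b ∈ t.1, n = Nat.pair a b},
    ⟨0, s.2, 0, t.2, by simp [Nat.pair]⟩⟩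

def pFst : pObj s t ⟶ s :=
  ⟨fun x => ⟨x.1.unpair.1, by
      obtain ⟨a, ha, b, hb, h⟩ := x.2
      rw [h, Nat.unpair_pair]; exact ha⟩,
    by apply Subtype.ext; show (Nat.unpair 0).1 = 0; simp⟩

def pSnd : pObj s t ⟶ t :=
  ⟨fun x => ⟨x.1.unpair.2, by
      obtain ⟨a, ha, b, hb, h⟩ := x.2
      rw [h, Nat.unpair_pair]; exact hb⟩,
    by apply Subtype.ext; show (Nat.unpair 0).2 = 0; simp⟩

def pLift (c : BinaryFan s t) : c.pt ⟶ pObj s t :=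
  ⟨fun z => ⟨Nat.pair (c.fst.1 z).1 (c.snd.1 z).1,
      ⟨_, (c.fst.1 z).2, _, (c.snd.1 z).2, rfl⟩⟩,
    by apply Subtype.ext; show Nat.pair (c.fst.1 _).1 (c.snd.1 _).1 = 0
       rw [c.fst.2, c.snd.2]; simp [Nat.pair]⟩

def pIsLimit : IsLimit (BinaryFan.mk (pFst s t) (pSnd s t)) := by
  refine BinaryFan.isLimitMk (pLift s t) (fun c => hext fun z => ?_)
    (fun c => hext fun z => ?_) (fun c m h1 h2 => hext fun z => ?_)
  · exact Subtype.ext (by show (Nat.unpair (Nat.pair _ _)).1 = _; simp)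
  · exact Subtype.ext (by show (Nat.unpair (Nat.pair _ _)).2 = _; simp)
  · apply Subtype.ext
    obtain ⟨a, ha, b, hb, h⟩ := (m.1 z).2
    show (m.1 z).1 = Nat.pair (c.fst.1 z).1 (c.snd.1 z).1
    have e1 : (c.fst.1 z).1 = a := by
      rw [← congrArg (fun q => (q.1 : ℕ)) (congrFun (congrArg (fun q => q.1) h1) z)]
      show ((m.1 z).1.unpair).1 = a
      rw [h, Nat.unpair_pair]
    have e2 : (c.snd.1 z).1 = b := by
      rw [← congrArg (fun q => (q.1 : ℕ)) (congrFun (congrArg (fun q => q.1) h2) z)]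
      show ((m.1 z).1.unpair).2 = b
      rw [h, Nat.unpair_pair]
    rw [e1, e2, h]

instance : HasLimit (pair s t) :=
  HasLimit.mk ⟨_, pIsLimit s t⟩

end Prod

instance : HasBinaryProducts Obj := hasBinaryProducts_of_hasLimit_pair _

section Eq

variable {s t : Obj} (f g : s ⟶ t)

def eObj : Obj :=
  ⟨{x | ∃ h : x ∈ s.1, f.1 ⟨x, h⟩ = g.1 ⟨x, h⟩}, ⟨s.2, by rw [f.2, g.2]⟩⟩

def eι : eObj f g ⟶ s := ⟨fun x => ⟨x.1, x.2.choose⟩, Subtype.ext rfl⟩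

theorem eCond : eι f g ≫ f = eι f g ≫ g := hext fun x => x.2.choose_spec

def eLift (c : Fork f g) : c.pt ⟶ eObj f g :=
  ⟨fun z => ⟨(c.ι.1 z).1, (c.ι.1 z).2, by
      have := congrFun (congrArg (fun q => q.1) c.condition) z
      exact this⟩,
    Subtype.ext (by show ((c.ι.1 _ : s.1) : ℕ) = 0; rw [c.ι.2])⟩

def eIsLimit : IsLimit (Fork.ofι (eι f g) (eCond f g)) := by
  refine Fork.IsLimit.mk _ (fun c => eLift f g c) (fun c => hext fun z => Subtype.ext rfl)
    (fun c m hm => hext fun z => Subtype.ext ?_)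
  exact congrArg (fun q => (q.1 : ℕ)) (congrFun (congrArg (fun q => q.1) hm) z)

instance : HasLimit (parallelPair f g) := HasLimit.mk ⟨_, eIsLimit f g⟩

end Eq

instance : HasEqualizers Obj := hasEqualizers_of_hasLimit_parallelPair _

instance : HasFiniteProducts Obj := hasFiniteProducts_of_has_binary_and_terminal
instance : HasFiniteLimits Obj := hasFiniteLimits_of_hasEqualizers_and_finite_products

end CEx

section PtdCEx

variable (M : MatrStar)

namespace PtdCEx

def OX : Pointed.{w} := ⟨ULift.{w} (Option (Fin M.k)), ⟨none⟩⟩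

def OP : Pointed.{w} := ⟨Fin M.n → ULift.{w} (Option (Fin M.k)), fun _ => ⟨none⟩⟩

def Rcond (v : Fin M.n → ULift.{w} (Option (Fin M.k))) : Prop :=
  (∀ i, (v i).down = none) ∨ ∃ j, ∀ i, (v i).down = M.left i j

def OR : Pointed.{w} :=
  ⟨{v // Rcond M v}, ⟨fun _ => ⟨none⟩, Or.inl fun _ => rfl⟩⟩

def OZ (M : MatrStar) : Pointed.{w} := ⟨ULift.{w} (Option Unit), ⟨none⟩⟩

def prj (i : Fin M.n) : OP M ⟶ OX M := ⟨fun v => v i, rfl⟩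

def hP : IsLimit (Fan.mk (OP M) (prj M)) := by
  refine mkFanLimit _
    (fun s => ⟨fun z i => (s.proj i).toFun z,
      funext fun i => (s.proj i).map_point⟩)
    (fun s i => Pointed.Hom.ext rfl)
    (fun s m hm => Pointed.Hom.ext (funext fun z => funext fun i => ?_))
  exact congrFun (congrArg Pointed.Hom.toFun (hm i)) z

def rr : OR M ⟶ OP M := ⟨Subtype.val, rfl⟩

instance : Mono (rr M) :=
  ⟨fun g h H => Pointed.Hom.ext (funext fun z =>
    Subtype.ext (congrFun (congrArg Pointed.Hom.toFun H) z))⟩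

def ff (a : Option (Fin M.k)) : OZ M ⟶ OX M :=
  ⟨fun z => ⟨z.down.bind fun _ => a⟩, rfl⟩

theorem ff_none : ff M none = 0 :=
  Pointed.Hom.ext (funext fun z => by rcases z with ⟨_ | u⟩ <;> rfl)

def gg (j : Fin M.m) : OZ M ⟶ OR M :=
  ⟨fun z => match z.down with
    | none => (OR M).point
    | some _ => ⟨fun i => ⟨M.left i j⟩, Or.inr ⟨j, fun _ => rfl⟩⟩, rfl⟩

theorem gg_fac (j : Fin M.m) :
    gg M j ≫ rr M = (hP M).lift (Fan.mk (OZ M) fun i => ff M (M.left i j)) :=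
  Pointed.Hom.ext (funext fun z => by rcases z with ⟨_ | u⟩ <;> rfl)

end PtdCEx

open PtdCEx in
theorem pointed_closed_implies (M : MatrStar)
    (h : M.HasClosedRels Pointed.{w} (MorphismProperty.monomorphisms Pointed.{w})) :
    (∀ i, M.right i = none) ∨ ∃ j : Fin M.m, ∀ i, M.right i = M.left i j := by
  obtain ⟨g, hg⟩ := h (OX M) (OP M) (OR M) (prj M) (hP M) (rr M)
    (inferInstance : Mono (rr M)) (OZ M) (ff M) (ff_none M)
    (fun j => ⟨gg M j, gg_fac M j⟩)
  have := congrFun (congrArg Pointed.Hom.toFun hg) ⟨some ()⟩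
  set wv := g.toFun ⟨some ()⟩ with hw
  have hv : wv.1 = fun i => ⟨M.right i⟩ := this
  rcases wv.2 with h1 | ⟨j, h2⟩
  · left; intro i
    have := h1 i
    rw [hv] at this
    exact this
  · right; exact ⟨j, fun i => by have := h2 i; rw [hv] at this; exact this⟩

end PtdCEx

namespace CEx

section Emb

variable (A : Type) [Countable A] (a₀ : A)

noncomputable def enc : A → ℕ :=
  fun a => Equiv.swap 0 ((Countable.exists_injective_nat A).choose a₀)
    ((Countable.exists_injective_nat A).choose a)

theorem enc_inj : Function.Injective (enc A a₀) :=
  (Equiv.injective _).comp (Countable.exists_injective_nat A).choose_spec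

theorem enc_pt : enc A a₀ a₀ = 0 := Equiv.swap_apply_right _ _

/-- The object of `Obj` representing the pointed countable type `(A, a₀)`. -/
noncomputable def pobj : Obj := ⟨Set.range (enc A a₀), ⟨a₀, enc_pt A a₀⟩⟩

noncomputable def eqv : A ≃ (pobj A a₀).1 :=
  Equiv.ofInjective (enc A a₀) (enc_inj A a₀)

theorem eqv_pt : eqv A a₀ a₀ = ⟨0, (pobj A a₀).2⟩ := Subtype.ext (enc_pt A a₀)

theorem eqv_symm_pt : (eqv A a₀).symm ⟨0, (pobj A a₀).2⟩ = a₀ := by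
  rw [← eqv_pt, Equiv.symm_apply_apply]

end Emb

section HomOf

variable {A B : Type} [Countable A] [Countable B] (a₀ : A) (b₀ : B)

noncomputable def homOf (f : A → B) (hf : f a₀ = b₀) : pobj A a₀ ⟶ pobj B b₀ :=
  ⟨fun x => eqv B b₀ (f ((eqv A a₀).symm x)), by
    show eqv B b₀ (f ((eqv A a₀).symm _)) = _
    rw [eqv_symm_pt, hf, eqv_pt]⟩

theorem homOf_val (f : A → B) (hf : f a₀ = b₀) (x : (pobj A a₀).1) :
    (homOf a₀ b₀ f hf).1 x = eqv B b₀ (f ((eqv A a₀).symm x)) := rfl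

end HomOf

end CEx

namespace CEx

variable (M : MatrStar)

def Rcond (v : Fin M.n → Option (Fin M.k)) : Prop :=
  (∀ i, v i = none) ∨ ∃ j, v = fun i => M.left i j

noncomputable def OX : Obj := pobj (Option (Fin M.k)) none

noncomputable def OP : Obj := pobj (Fin M.n → Option (Fin M.k)) (fun _ => none)

noncomputable def OR : Obj :=
  pobj {v // Rcond M v} ⟨fun _ => none, Or.inl fun _ => rfl⟩

noncomputable def OZ (M : MatrStar) : Obj := pobj (Option Unit) none

noncomputable def prj (i : Fin M.n) : OP M ⟶ OX M :=
  homOf _ _ (fun v => v i) rfl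

noncomputable def plift (s : Fan (fun _ : Fin M.n => OX M)) : s.pt ⟶ OP M :=
  ⟨fun z => eqv _ _ (fun i => (eqv _ _).symm ((s.proj i).1 z)), by
    show eqv _ _ (fun i => (eqv _ _).symm ((s.proj i).1 _)) = _
    have h1 : ∀ i, (s.proj i).1 ⟨0, s.pt.2⟩ = ⟨0, (OX M).2⟩ := fun i => (s.proj i).2
    have h2 : (fun i => (eqv (Option (Fin M.k)) none).symm ((s.proj i).1 ⟨0, s.pt.2⟩))
        = fun _ => none := by
      funext i; erw [h1 i, eqv_symm_pt]
    erw [h2, eqv_pt]; rfl⟩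

theorem plift_val (s : Fan (fun _ : Fin M.n => OX M)) (z : s.pt.1) :
    (plift M s).1 z = eqv _ _ (fun i => (eqv _ _).symm ((s.proj i).1 z)) := rfl

theorem prj_val (i : Fin M.n) (x : (OP M).1) :
    (prj M i).1 x = eqv _ _ (((eqv _ _).symm x) i) := rfl

noncomputable def hP : IsLimit (Fan.mk (OP M) (prj M)) := by
  refine mkFanLimit _ (plift M) (fun s i => hext fun z => ?_)
    (fun s m hm => hext fun z => ?_)
  · show (prj M i).1 ((plift M s).1 z) = (s.proj i).1 z
    erw [plift_val, prj_val, Equiv.symm_apply_apply, Equiv.apply_symm_apply]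
  · show m.1 z = (plift M s).1 z
    have key : ∀ i, (eqv _ _).symm (m.1 z) i = (eqv _ _).symm ((s.proj i).1 z) := by
      intro i
      have := congrFun (congrArg Subtype.val (hm i)) z
      have h2 : (prj M i).1 (m.1 z) = (s.proj i).1 z := this
      rw [prj_val] at h2
      have := congrArg (eqv (Option (Fin M.k)) none).symm h2
      rwa [Equiv.symm_apply_apply] at this
    erw [plift_val, ← funext key, Equiv.apply_symm_apply]

noncomputable def rr : OR M ⟶ OP M := homOf _ _ Subtype.val rfl

theorem rr_inj : Function.Injective (rr M).1 := by
  intro x y h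
  erw [rr, homOf_val, homOf_val] at h
  have := (eqv _ _).injective h
  exact (eqv _ _).symm.injective (Subtype.ext this)

instance : Mono (rr M) :=
  ⟨fun g h H => hext fun z => rr_inj M (congrFun (congrArg Subtype.val H) z)⟩

noncomputable def ff (a : Option (Fin M.k)) : OZ M ⟶ OX M :=
  homOf _ _ (fun o => o.bind fun _ => a) rfl

theorem ff_none : ff M none = 0 := by
  refine hext fun x => ?_
  erw [ff, homOf_val]
  have : (((eqv (Option Unit) none).symm x).bind fun _ => (none : Option (Fin M.k)))
      = none := by
    rcases ((eqv (Option Unit) none).symm x) with _ | u <;> rfl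
  rw [this, eqv_pt]
  rfl

noncomputable def gg (j : Fin M.m) : OZ M ⟶ OR M :=
  homOf _ _ (fun o => match o with
    | none => ⟨fun _ => none, Or.inl fun _ => rfl⟩
    | some _ => ⟨fun i => M.left i j, Or.inr ⟨j, rfl⟩⟩) rfl

theorem gg_fac (j : Fin M.m) :
    gg M j ≫ rr M = (hP M).lift (Fan.mk (OZ M) fun i => ff M (M.left i j)) := by
  refine hext fun z => ?_
  show (rr M).1 ((gg M j).1 z) = (plift M (Fan.mk (OZ M) fun i => ff M (M.left i j))).1 z
  erw [rr, gg, plift, homOf_val, homOf_val]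
  show _ = eqv _ _ (fun i => (eqv _ _).symm ((ff M (M.left i j)).1 z))
  have hf : ∀ i, (eqv _ _).symm ((ff M (M.left i j)).1 z)
      = (((eqv (Option Unit) none).symm z).bind fun _ => M.left i j) := by
    intro i; erw [ff, homOf_val, Equiv.symm_apply_apply]
  rw [funext hf, Equiv.symm_apply_apply]
  rcases h : ((eqv (Option Unit) none).symm z) with _ | u <;> simp only [h] <;> rfl

open MatrStar in
theorem obj_closed_implies
    (h : M.HasClosedRels Obj (MorphismProperty.monomorphisms Obj)) :
    (∀ i, M.right i = none) ∨ ∃ j : Fin M.m, ∀ i, M.right i = M.left i j := by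
  obtain ⟨g, hg⟩ := h (OX M) (OP M) (OR M) (prj M) (hP M) (rr M)
    (inferInstance : Mono (rr M)) (OZ M) (ff M) (ff_none M)
    (fun j => ⟨gg M j, gg_fac M j⟩)
  have hz := congrFun (congrArg Subtype.val hg) (eqv (Option Unit) none (some ()))
  rw [show g ≫ rr M = _ from rfl] at hz
  have hz2 : (rr M).1 (g.1 (eqv (Option Unit) none (some ())))
      = (plift M (Fan.mk (OZ M) fun i => ff M (M.right i))).1
          (eqv (Option Unit) none (some ())) := hz
  erw [rr, homOf_val, plift] at hz2
  set wv := (eqv _ _).symm (g.1 (eqv (Option Unit) none (some ()))) with hwv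
  have hval : wv.1 = fun i => M.right i := by
    have := congrArg (eqv (Fin M.n → Option (Fin M.k)) fun _ => none).symm hz2
    rw [Equiv.symm_apply_apply, Equiv.symm_apply_apply] at this
    rw [this]
    funext i
    show (eqv _ _).symm ((ff M (M.right i)).1 (eqv (Option Unit) none (some ()))) = M.right i
    rw [ff, homOf_val, Equiv.symm_apply_apply, Equiv.symm_apply_apply]
    rfl
  rcases wv.2 with h1 | ⟨j, h2⟩
  · left; intro i
    have := h1 i; rw [hval] at this; exact this
  · right; exact ⟨j, fun i => by
      have := congrFun h2 i
      rw [hval] at this; exact this⟩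

end CEx

attribute [local instance] uliftCategory

namespace LiftCEx

universe v₂ u₂ v₀ u₀

variable (D : Type u₀) [Category.{v₀} D]

instance [HasZeroMorphisms D] : HasZeroMorphisms (ULift.{u₂} D) where
  zero X Y := ⟨(0 : X.down ⟶ Y.down)⟩
  comp_zero {X Y} f Z := comp_zero (C := D) (f := f) (Z := Z.down)
  zero_comp X {Y Z} f := zero_comp (C := D) (X := X.down) (f := f)

instance [HasZeroMorphisms D] :
    HasZeroMorphisms (ULiftHom.{v₂} (ULift.{u₂} D)) where
  zero X Y := ⟨⟨(0 : X.objDown.down ⟶ Y.objDown.down)⟩⟩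
  comp_zero {X Y} f Z :=
    congrArg ULift.up (comp_zero (C := D) (f := f.down) (Z := Z.objDown.down))
  zero_comp X {Y Z} f :=
    congrArg ULift.up (zero_comp (C := D) (X := X.objDown.down) (f := f.down))

instance [HasZeroObject D] : HasZeroObject (ULiftHom.{v₂} (ULift.{u₂} D)) := by
  obtain ⟨Z₀, hZ₀⟩ := HasZeroObject.zero (C := D)
  refine ⟨⟨ULiftHom.objUp ⟨Z₀⟩, ⟨fun Y => ?_, fun Y => ?_⟩⟩⟩
  · exact (hZ₀.unique_to Y.objDown.down).map fun u =>
      ⟨⟨⟨u.default⟩⟩, fun f => congrArg ULift.up (u.uniq f.down)⟩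
  · exact (hZ₀.unique_from Y.objDown.down).map fun u =>
      ⟨⟨⟨u.default⟩⟩, fun f => congrArg ULift.up (u.uniq f.down)⟩

instance [HasFiniteLimits D] :
    HasFiniteLimits (ULiftHom.{v₂} (ULift.{u₂} D)) :=
  ⟨fun J _ _ => Adjunction.hasLimitsOfShape_of_equivalence
    ((ULiftHomULiftCategory.equiv.{v₂, u₂} D).inverse)⟩

variable {D}

/-- Object lift. -/
def upo (A : D) : ULiftHom.{v₂} (ULift.{u₂} D) := ULiftHom.objUp ⟨A⟩

/-- Morphism lift. -/
def uph {A B : D} (f : A ⟶ B) : upo.{v₂, u₂} A ⟶ upo B := ⟨f⟩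

def upFan {n : ℕ} {X P : D} (pr : Fin n → (P ⟶ X)) :
    Fan (fun _ : Fin n => upo.{v₂, u₂} X) :=
  Fan.mk (upo P) (fun i => uph (pr i))

def upIsLimit {n : ℕ} {X P : D} (pr : Fin n → (P ⟶ X))
    (hP : IsLimit (Fan.mk P pr)) : IsLimit (upFan.{v₂, u₂} pr) :=
  mkFanLimit _
    (fun s => ⟨hP.lift (Fan.mk s.pt.objDown.down fun i => (s.proj i).down)⟩)
    (fun s i => congrArg ULift.up
      (hP.fac (Fan.mk s.pt.objDown.down fun i => (s.proj i).down) ⟨i⟩))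
    (fun s m hm => congrArg ULift.up
      (hP.uniq (Fan.mk s.pt.objDown.down fun i => (s.proj i).down) m.down
        fun ⟨i⟩ => congrArg ULift.down (hm i)))

theorem transfer [HasZeroMorphisms D] (M : MatrStar)
    (h : M.HasClosedRels (ULiftHom.{v₂} (ULift.{u₂} D))
      (MorphismProperty.monomorphisms (ULiftHom.{v₂} (ULift.{u₂} D)))) :
    M.HasClosedRels D (MorphismProperty.monomorphisms D) := by
  intro X P R pr hP r hr Z f hf hleft
  have mono' : Mono (uph.{v₂, u₂} r) := by
    constructor
    intro W g g' H
    have h1 : g.down ≫ r = g'.down ≫ r := congrArg ULift.down H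
    exact congrArg ULift.up (hr.right_cancellation _ _ h1)
  obtain ⟨g, hg⟩ := h (upo X) (upo P) (upo R) (fun i => uph (pr i))
    (upIsLimit pr hP) (uph r) mono' (upo Z)
    (fun a => uph (f a)) (congrArg ULift.up hf)
    (fun j => by
      obtain ⟨g, hg⟩ := hleft j
      exact ⟨uph g, congrArg ULift.up hg⟩)
  exact ⟨g.down, congrArg ULift.down hg⟩

end LiftCEx
/-- For a set `S` of pointed matrices, the following are
equivalent: (i) every finitely complete pointed category has `S`-closed
relations; (ii) the category of pointed sets has `S`-closed relations;
(iii) for every `M ∈ S`, all entries of the right column of `M` are `∗`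
(i.e. `none`), or the right column equals one of the left columns. -/
theorem pointed_antiTrivial_characterization (S : Set MatrStar) :
    ((∀ (C : Type u) [Category.{v} C] [HasFiniteLimits C] [HasZeroObject C]
        [HasZeroMorphisms C],
        MatrStar.HasSClosedRels S C (MorphismProperty.monomorphisms C)) ↔
      MatrStar.HasSClosedRels S Pointed.{w}
        (MorphismProperty.monomorphisms Pointed.{w})) ∧
    ((∀ (C : Type u) [Category.{v} C] [HasFiniteLimits C] [HasZeroObject C]
        [HasZeroMorphisms C],
        MatrStar.HasSClosedRels S C (MorphismProperty.monomorphisms C)) ↔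
      ∀ M ∈ S, (∀ i, M.right i = none) ∨
        ∃ j : Fin M.m, ∀ i, M.right i = M.left i j) := by
  have toiii : (∀ (C : Type u) [Category.{v} C] [HasFiniteLimits C] [HasZeroObject C]
      [HasZeroMorphisms C],
      MatrStar.HasSClosedRels S C (MorphismProperty.monomorphisms C)) →
      ∀ M ∈ S, (∀ i, M.right i = none) ∨
        ∃ j : Fin M.m, ∀ i, M.right i = M.left i j := by
    intro h M hM
    exact CEx.obj_closed_implies M
      (LiftCEx.transfer.{v, u} M (h (ULiftHom.{v} (ULift.{u} CEx.Obj)) M hM))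
  constructor
  · constructor
    · intro h M hM X P R pr hP r _
      exact triv_closed M (toiii h M hM) X P R pr hP r
    · intro h C _ _ _ _ M hM X P R pr hP r _
      exact triv_closed M (pointed_closed_implies M (h M hM)) X P R pr hP r
  · constructor
    · exact toiii
    · intro h C _ _ _ _ M hM X P R pr hP r _
      exact triv_closed M (h M hM) X P R pr hP r
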